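/- Let R be a v-Marot Mori commutative ring with R^• ≠ R^× such that R has exactly one regular prime v-ideal (|v-spec_r(R)| = 1). Then R is strongly primary: for every a ∈ R^• ∖ R^× there exists n ∈ ℕ such that every product of n elements of R^• ∖ R^× lies in a·R^•. -/

import Mathlib

namespace Paper

/-- The set of regular elements of a subset `A` of an ambient commutative ring `T`:
the elements of `A` that are non-zero-divisors on `A`. -/
def reg {T : Type*} [CommRing T] (A : Set T) : Set T :=
  {x | x ∈ A ∧ ∀ y ∈ A, x * y = 0 → y = 0}

/-- The units of a subset `A`: the elements of `A` having an inverse in `A`. -/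
def unitsIn {T : Type*} [CommRing T] (A : Set T) : Set T :=
  {x | x ∈ A ∧ ∃ y ∈ A, x * y = 1}

/-- `(R : X) = {z ∈ T : z·X ⊆ R}`. -/
def colonS {T : Type*} [CommRing T] (R : Subring T) (X : Set T) : Set T :=
  {z : T | ∀ x ∈ X, z * x ∈ R}

/-- The `v`-operation `X ↦ X_v = (X⁻¹)⁻¹ = (R : (R : X))`. -/
def vOp {T : Type*} [CommRing T] (R : Subring T) (X : Set T) : Set T :=
  colonS R (colonS R X)

/-- `M` is an `R`-submodule of the ambient ring `T`. -/
def IsSubmoduleOf {T : Type*} [CommRing T] (R : Subring T) (M : Set T) : Prop :=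
  (0 : T) ∈ M ∧ (∀ x ∈ M, ∀ y ∈ M, x + y ∈ M) ∧
    ∀ r ∈ (R : Set T), ∀ x ∈ M, r * x ∈ M

/-- `I` is an (integral) ideal of the subring `R`. -/
def IsIdealOf {T : Type*} [CommRing T] (R : Subring T) (I : Set T) : Prop :=
  IsSubmoduleOf R I ∧ I ⊆ (R : Set T)

/-- `P` is a prime ideal of the subring `R`. -/
def IsPrimeIdealOf {T : Type*} [CommRing T] (R : Subring T) (P : Set T) : Prop :=
  IsIdealOf R P ∧ P ≠ (R : Set T) ∧
    ∀ x ∈ (R : Set T), ∀ y ∈ (R : Set T), x * y ∈ P → x ∈ P ∨ y ∈ P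

/-- `R` is a `v`-Marot ring: every regular fractional `v`-ideal `I` is
`v`-generated by its set `I^•` of regular elements, i.e. `I = (I^•·R)_v`. -/
def IsVMarot {T : Type*} [CommRing T] (R : Subring T) : Prop :=
  ∀ I : Set T, IsSubmoduleOf R I → (∃ x ∈ I, x ∈ reg (Set.univ : Set T)) →
    (∃ c ∈ reg (R : Set T), ∀ x ∈ I, c * x ∈ R) → vOp R I = I →
    I = vOp R (I ∩ reg (Set.univ : Set T))

/-- `D` is completely integrally closed in the ambient total quotient ring `T`:
every almost integral element of `T` lies in `D`. -/
def IsCIC {T : Type*} [CommRing T] (D : Subring T) : Prop :=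
  ∀ x : T, (∃ c ∈ reg (D : Set T), ∀ n : ℕ, c * x ^ n ∈ D) → x ∈ D

/-- `D` is a Mori ring: the ascending chain condition holds on regular
divisorial integral ideals of `D`. -/
def IsMoriRing {T : Type*} [CommRing T] (D : Subring T) : Prop :=
  ∀ f : ℕ → Set T,
    (∀ n, f n ⊆ (D : Set T) ∧ vOp D (f n) = f n ∧ ∃ x ∈ f n, x ∈ reg (D : Set T)) →
    (∀ n, f n ⊆ f (n + 1)) → ∃ n, ∀ m, n ≤ m → f m = f n

/-- The ring `R` is strongly primary: `R^• ≠ R^×` and for every regular non-unit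
`a` there is `n ∈ ℕ` such that every product of `n` regular non-units lies in
`a·R^•`. -/
def IsStronglyPrimaryRing {T : Type*} [CommRing T] (R : Subring T) : Prop :=
  reg (R : Set T) ≠ unitsIn (R : Set T) ∧
    ∀ a ∈ reg (R : Set T), a ∉ unitsIn (R : Set T) →
      ∃ n : ℕ, 0 < n ∧ ∀ f : Fin n → T,
        (∀ i, f i ∈ reg (R : Set T) ∧ f i ∉ unitsIn (R : Set T)) →
          ∃ h ∈ reg (R : Set T), (∏ i, f i) = a * h

section Basic
variable {T : Type*} [CommRing T] (R : Subring T)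

lemma colonS_anti {X Y : Set T} (h : X ⊆ Y) : colonS R Y ⊆ colonS R X :=
  fun z hz x hx => hz x (h hx)

lemma subset_cc (X : Set T) : X ⊆ colonS R (colonS R X) :=
  fun x hx z hz => by rw [mul_comm]; exact hz x hx

lemma vOp_mono {X Y : Set T} (h : X ⊆ Y) : vOp R X ⊆ vOp R Y :=
  colonS_anti R (colonS_anti R h)

lemma subset_vOp (X : Set T) : X ⊆ vOp R X := subset_cc R X

lemma ccc (X : Set T) : colonS R (colonS R (colonS R X)) = colonS R X :=
  subset_antisymm (colonS_anti R (subset_cc R X)) (subset_cc R _)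

lemma vOp_vOp (X : Set T) : vOp R (vOp R X) = vOp R X := by
  show colonS R (colonS R (colonS R (colonS R X))) = _
  rw [ccc]
  rfl

lemma colonS_submodule (Y : Set T) : IsSubmoduleOf R (colonS R Y) := by
  refine ⟨fun x hx => by simpa using R.zero_mem, ?_, ?_⟩
  · intro z hz w hw x hx
    have : (z + w) * x = z * x + w * x := by ring
    rw [this]; exact R.add_mem (hz x hx) (hw x hx)
  · intro r hr z hz x hx
    have : r * z * x = r * (z * x) := by ring
    rw [this]; exact R.mul_mem hr (hz x hx)

lemma colonS_self : colonS R (R : Set T) = (R : Set T) := by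
  ext z
  constructor
  · intro h; simpa using h 1 R.one_mem
  · intro hz x hx; exact R.mul_mem hz hx

lemma vOp_subring : vOp R (R : Set T) = (R : Set T) := by
  show colonS R (colonS R (R : Set T)) = _
  rw [colonS_self, colonS_self]

lemma vOp_subset {X : Set T} (h : X ⊆ (R : Set T)) : vOp R X ⊆ (R : Set T) := by
  intro z hz
  simpa using hz 1 (fun x hx => by simpa using h hx)

lemma mul_mem_vOp {X Y : Set T} {z w : T} (hz : z ∈ vOp R X) (hw : w ∈ vOp R Y) :
    z * w ∈ vOp R (Set.image2 (· * ·) X Y) := by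
  intro u hu
  have h1 : w * u ∈ colonS R X := by
    intro x hx
    have h2 : u * x ∈ colonS R Y := by
      intro y hy
      have := hu (x * y) (Set.mem_image2_of_mem hx hy)
      have e : u * x * y = u * (x * y) := by ring
      rw [e]; exact this
    have := hw _ h2
    have e : w * u * x = w * (u * x) := by ring
    rw [e]; exact this
  have := hz _ h1
  have e : z * w * u = z * (w * u) := by ring
  rw [e]; exact this

/-- `a·R` as a set. -/
def smulR (a : T) : Set T := {x | ∃ r ∈ (R : Set T), x = a * r}

lemma smulR_subset {a : T} (ha : a ∈ R) : smulR R a ⊆ (R : Set T) := by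
  rintro x ⟨r, hr, rfl⟩; exact R.mul_mem ha hr

lemma self_mem_smulR {a : T} : a ∈ smulR R a := ⟨1, R.one_mem, (mul_one a).symm⟩

lemma vOp_smulR {a : T} (hu : IsUnit a) : vOp R (smulR R a) = smulR R a := by
  refine subset_antisymm ?_ (subset_vOp R _)
  intro w hw
  have hinv : (↑hu.unit⁻¹ : T) ∈ colonS R (smulR R a) := by
    rintro x ⟨r, hr, rfl⟩
    have e : (↑hu.unit⁻¹ : T) * (a * r) = (↑hu.unit⁻¹ * a) * r := by ring
    rw [e, IsUnit.val_inv_mul, one_mul]; exact hr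
  refine ⟨w * ↑hu.unit⁻¹, hw _ hinv, ?_⟩
  have : a * (w * ↑hu.unit⁻¹) = (a * ↑hu.unit⁻¹) * w := by ring
  rw [this, IsUnit.mul_val_inv, one_mul]

end Basic

section Reg
variable {T : Type*} [CommRing T] (R : Subring T)

lemma one_mem_reg : (1 : T) ∈ reg (R : Set T) :=
  ⟨R.one_mem, fun y _ h => by simpa using h⟩

lemma mul_mem_reg {x y : T} (hx : x ∈ reg (R : Set T)) (hy : y ∈ reg (R : Set T)) :
    x * y ∈ reg (R : Set T) := by
  refine ⟨R.mul_mem hx.1 hy.1, fun z hz h => ?_⟩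
  have e : x * (y * z) = x * y * z := by ring
  exact hy.2 z hz (hx.2 (y * z) (R.mul_mem hy.1 hz) (by rw [e, h]))

lemma reg_of_mul_reg {a h : T} (ha : a ∈ (R : Set T)) (hh : h ∈ (R : Set T))
    (hah : a * h ∈ reg (R : Set T)) : h ∈ reg (R : Set T) := by
  refine ⟨hh, fun y hy h0 => ?_⟩
  exact hah.2 y hy (by rw [mul_assoc, h0, mul_zero])

lemma reg_univ_of_isUnit {a : T} (hu : IsUnit a) : a ∈ reg (Set.univ : Set T) := by
  refine ⟨Set.mem_univ a, fun y _ h => ?_⟩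
  have := congrArg (fun t => (↑hu.unit⁻¹ : T) * t) h
  simpa [← mul_assoc, IsUnit.val_inv_mul] using this

lemma prod_mem_reg {n : ℕ} (f : Fin n → T) (hf : ∀ i, f i ∈ reg (R : Set T)) :
    (∏ i, f i) ∈ reg (R : Set T) := by
  induction n with
  | zero => simpa using one_mem_reg R
  | succ n ih =>
    rw [Fin.prod_univ_succ]
    exact mul_mem_reg R (hf 0) (ih _ (fun i => hf i.succ))

/-- Existence of maximal elements in families of regular divisorial ideals, via Mori ACC. -/
lemma exists_maximal (hmori : IsMoriRing R) (F : Set T → Prop)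
    (hF : ∀ J, F J → J ⊆ (R : Set T) ∧ vOp R J = J ∧ ∃ x ∈ J, x ∈ reg (R : Set T))
    {I : Set T} (hI : F I) :
    ∃ J, F J ∧ I ⊆ J ∧ ∀ K, F K → J ⊆ K → K = J := by
  by_contra hcon
  push_neg at hcon
  have step : ∀ J : {J : Set T // F J ∧ I ⊆ J},
      ∃ K : {J : Set T // F J ∧ I ⊆ J}, J.1 ⊆ K.1 ∧ K.1 ≠ J.1 := by
    rintro ⟨J, hJ, hIJ⟩
    obtain ⟨K, hK, hJK, hne⟩ := hcon J hJ hIJ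
    exact ⟨⟨K, hK, hIJ.trans hJK⟩, hJK, hne⟩
  choose g hg1 hg2 using step
  let c : ℕ → {J : Set T // F J ∧ I ⊆ J} :=
    fun n => Nat.recAux (⟨I, hI, subset_rfl⟩ : {J : Set T // F J ∧ I ⊆ J}) (fun _ J => g J) n
  have hc : ∀ n, c (n + 1) = g (c n) := fun n => rfl
  obtain ⟨n, hn⟩ := hmori (fun n => (c n).1) (fun n => hF _ (c n).2.1)
    (fun n => by show (c n).1 ⊆ (c (n+1)).1; rw [hc]; exact hg1 (c n))
  have := hn (n + 1) (Nat.le_succ n)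
  simp only [hc] at this
  exact hg2 (c n) this

end Reg

section Prime
variable {T : Type*} [CommRing T] (R : Subring T)

/-- `P + x·R` as a set. -/
def addSet (P : Set T) (x : T) : Set T := {t | ∃ p ∈ P, ∃ r ∈ (R : Set T), t = p + x * r}

lemma subset_addSet (P : Set T) (x : T) : P ⊆ addSet R P x :=
  fun p hp => ⟨p, hp, 0, R.zero_mem, by ring⟩

lemma mem_addSet (P : Set T) (hP : (0:T) ∈ P) (x : T) : x ∈ addSet R P x :=
  ⟨0, hP, 1, R.one_mem, by ring⟩

lemma addSet_subset {P : Set T} (hP : P ⊆ (R : Set T)) {x : T} (hx : x ∈ (R : Set T)) :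
    addSet R P x ⊆ (R : Set T) := by
  rintro t ⟨p, hp, r, hr, rfl⟩
  exact R.add_mem (hP hp) (R.mul_mem hx hr)

lemma image2_addSet_subset {P : Set T} (hsub : IsSubmoduleOf R P) (hPR : P ⊆ (R : Set T))
    {x y : T} (hx : x ∈ (R : Set T)) (hy : y ∈ (R : Set T)) (hxy : x * y ∈ P) :
    Set.image2 (· * ·) (addSet R P x) (addSet R P y) ⊆ P := by
  rintro t ⟨u, ⟨p, hp, r, hr, rfl⟩, v, ⟨p', hp', r', hr', rfl⟩, rfl⟩
  obtain ⟨-, hadd, hsmul⟩ := hsub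
  have h1 : (p' + y * r') * p ∈ P :=
    hsmul _ (R.add_mem (hPR hp') (R.mul_mem hy hr')) _ hp
  have h2 : (x * r) * p' ∈ P := hsmul _ (R.mul_mem hx hr) _ hp'
  have h3 : (r * r') * (x * y) ∈ P := hsmul _ (R.mul_mem hr hr') _ hxy
  have e : (p + x * r) * (p' + y * r') =
      ((p' + y * r') * p + (x * r) * p') + (r * r') * (x * y) := by ring
  show (p + x * r) * (p' + y * r') ∈ P
  rw [e]
  exact hadd _ (hadd _ h1 _ h2) _ h3

/-- Key lemma: a maximal regular divisorial ideal avoiding the powers of `b` is prime. -/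
lemma exists_prime (hmori : IsMoriRing R) {a b : T}
    (ha : a ∈ reg (R : Set T)) (hau : IsUnit a) (hb : b ∈ (R : Set T))
    (hpow : ∀ n : ℕ, b ^ n ∉ smulR R a) :
    ∃ P : Set T, IsPrimeIdealOf R P ∧ vOp R P = P ∧ (∃ x ∈ P, x ∈ reg (R : Set T)) ∧
      smulR R a ⊆ P ∧ ∀ n : ℕ, b ^ n ∉ P := by
  set F : Set T → Prop := fun J =>
    J ⊆ (R : Set T) ∧ vOp R J = J ∧ smulR R a ⊆ J ∧ ∀ n : ℕ, b ^ n ∉ J with hFdef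
  have hF : ∀ J, F J → J ⊆ (R : Set T) ∧ vOp R J = J ∧ ∃ x ∈ J, x ∈ reg (R : Set T) :=
    fun J hJ => ⟨hJ.1, hJ.2.1, a, hJ.2.2.1 (self_mem_smulR R), ha⟩
  have hI : F (smulR R a) :=
    ⟨smulR_subset R ha.1, vOp_smulR R hau, subset_rfl, hpow⟩
  obtain ⟨P, hP, -, hmax⟩ := exists_maximal R hmori F hF hI
  obtain ⟨hPR, hPv, haP, hbP⟩ := hP
  have hsub : IsSubmoduleOf R P := hPv ▸ colonS_submodule R _
  have h1P : (1 : T) ∉ P := by simpa using hbP 0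
  have key : ∀ x ∈ (R : Set T), x ∉ P → ∃ m : ℕ, b ^ m ∈ vOp R (addSet R P x) := by
    intro x hx hxP
    by_contra hno
    push_neg at hno
    have hFP1 : F (vOp R (addSet R P x)) := by
      refine ⟨vOp_subset R (addSet_subset R hPR hx), vOp_vOp R _, ?_, hno⟩
      exact fun t ht => subset_vOp R _ (subset_addSet R P x (haP ht))
    have hPsub : P ⊆ vOp R (addSet R P x) :=
      (subset_addSet R P x).trans (subset_vOp R _)
    have := hmax _ hFP1 hPsub
    exact hxP (this ▸ subset_vOp R _ (mem_addSet R P hsub.1 x))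
  refine ⟨P, ⟨⟨hsub, hPR⟩, ?_, ?_⟩, hPv, ⟨a, haP (self_mem_smulR R), ha⟩, haP, hbP⟩
  · intro hPeq
    exact h1P (hPeq ▸ R.one_mem)
  · intro x hx y hy hxy
    by_contra hcon
    push_neg at hcon
    obtain ⟨m, hm⟩ := key x hx hcon.1
    obtain ⟨k, hk⟩ := key y hy hcon.2
    have : b ^ (m + k) ∈ vOp R (Set.image2 (· * ·) (addSet R P x) (addSet R P y)) := by
      rw [pow_add]
      exact mul_mem_vOp R hm hk
    have hmem : b ^ (m + k) ∈ P := by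
      have hmono := vOp_mono R (image2_addSet_subset R hsub hPR hx hy hxy)
      exact hPv ▸ hmono this
    exact hbP (m + k) hmem

end Prime

section Prod
variable {T : Type*} [CommRing T] (R : Subring T)

/-- The set of `n`-fold products of elements of `G`. -/
def prodSet (G : Set T) : ℕ → Set T
  | 0 => {(1 : T)}
  | n + 1 => Set.image2 (· * ·) G (prodSet G n)

lemma prod_mem_vOp_prodSet {G : Set T} :
    ∀ (n : ℕ) (f : Fin n → T), (∀ i, f i ∈ vOp R G) → (∏ i, f i) ∈ vOp R (prodSet G n) := by
  intro n
  induction n with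
  | zero =>
    intro f _
    have h1 : (1 : T) ∈ prodSet G 0 := rfl
    simpa using subset_vOp R _ h1
  | succ n ih =>
    intro f hf
    rw [Fin.prod_univ_succ]
    exact mul_mem_vOp R (hf 0) (ih _ (fun i => hf i.succ))

lemma prodSet_char {G : Set T} :
    ∀ n, ∀ x ∈ prodSet G n, ∃ g : Fin n → T, (∀ i, g i ∈ G) ∧ x = ∏ i, g i := by
  intro n
  induction n with
  | zero =>
    intro x hx
    exact ⟨fun i => i.elim0, fun i => i.elim0, by simpa using (show x = 1 from hx)⟩
  | succ n ih =>
    rintro x ⟨u, hu, v, hv, rfl⟩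
    obtain ⟨g, hg, rfl⟩ := ih v hv
    exact ⟨Fin.cons u g, fun i => Fin.cases hu hg i, by rw [Fin.prod_cons]⟩

lemma smulR_mul_mem {a x t : T} (hx : x ∈ smulR R a) (ht : t ∈ (R : Set T)) :
    x * t ∈ smulR R a := by
  obtain ⟨r, hr, rfl⟩ := hx
  exact ⟨r * t, R.mul_mem hr ht, by ring⟩

lemma pow_smulR_mono {a g : T} (hg : g ∈ (R : Set T)) {n m : ℕ} (hn : g ^ n ∈ smulR R a)
    (hnm : n ≤ m) : g ^ m ∈ smulR R a := by
  have e : g ^ m = g ^ n * g ^ (m - n) := by rw [← pow_add, Nat.add_sub_cancel' hnm]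
  rw [e]
  exact smulR_mul_mem R hn (pow_mem hg _)

lemma exists_uniform_pow (a : T) (G : Finset T)
    (h : ∀ g ∈ G, g ∈ (R : Set T) ∧ ∃ n, g ^ n ∈ smulR R a) :
    ∃ M, ∀ g ∈ G, g ^ M ∈ smulR R a := by
  classical
  induction G using Finset.induction with
  | empty => exact ⟨0, fun g hg => absurd hg (by simp)⟩
  | @insert g₀ s hnot ih =>
    obtain ⟨M, hM⟩ := ih (fun g hg => h g (Finset.mem_insert_of_mem hg))
    obtain ⟨hg₀R, n, hn⟩ := h g₀ (Finset.mem_insert_self g₀ s)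
    refine ⟨max n M, fun g hg => ?_⟩
    rcases Finset.mem_insert.mp hg with rfl | hgs
    · exact pow_smulR_mono R hg₀R hn (le_max_left n M)
    · exact pow_smulR_mono R (h g (Finset.mem_insert_of_mem hgs)).1 (hM g hgs)
        (le_max_right n M)

lemma prodSet_subset_smulR (a : T) (G : Finset T) (hGR : (↑G : Set T) ⊆ (R : Set T))
    {M : ℕ} (hM : ∀ g ∈ G, g ^ M ∈ smulR R a) :
    prodSet (↑G : Set T) (G.card * M + 1) ⊆ smulR R a := by
  classical
  intro x hx
  obtain ⟨g, hg, rfl⟩ := prodSet_char (G := (↑G : Set T)) _ x hx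
  have hmap : ∀ i ∈ (Finset.univ : Finset (Fin (G.card * M + 1))), g i ∈ G := fun i _ => hg i
  have hcard : G.card * M < (Finset.univ : Finset (Fin (G.card * M + 1))).card := by simp
  obtain ⟨e, heG, hMlt⟩ := Finset.exists_lt_card_fiber_of_mul_lt_card_of_maps_to hmap hcard
  set s := Finset.univ.filter (fun i => g i = e) with hs
  have hsplit := Finset.prod_filter_mul_prod_filter_not
    (Finset.univ : Finset (Fin (G.card * M + 1))) (fun i => g i = e) g
  have h1 : ∏ i ∈ s, g i = e ^ s.card := by
    rw [Finset.prod_congr rfl (fun i hi => (Finset.mem_filter.mp hi).2), Finset.prod_const]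
  have h2 : (∏ i ∈ Finset.univ.filter (fun i => ¬ g i = e), g i) ∈ (R : Set T) :=
    prod_mem (fun i _ => hGR (hg i))
  have hMle : M ≤ s.card := le_of_lt hMlt
  obtain ⟨r, hr, hre⟩ := hM e heG
  refine ⟨r * e ^ (s.card - M) * (∏ i ∈ Finset.univ.filter (fun i => ¬ g i = e), g i),
    R.mul_mem (R.mul_mem hr (pow_mem (hGR heG) _)) h2, ?_⟩
  have e1 : e ^ s.card = e ^ M * e ^ (s.card - M) := by
    rw [← pow_add, Nat.add_sub_cancel' hMle]
  calc ∏ i, g i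
      = (∏ i ∈ s, g i) * ∏ i ∈ Finset.univ.filter (fun i => ¬ g i = e), g i := hsplit.symm
    _ = (a * r) * e ^ (s.card - M) * ∏ i ∈ Finset.univ.filter (fun i => ¬ g i = e), g i := by
        rw [h1, e1, hre]; try ring
    _ = a * (r * e ^ (s.card - M) * ∏ i ∈ Finset.univ.filter (fun i => ¬ g i = e), g i) := by
        ring

end Prod

/-- a `v`-Marot Mori ring `R` with `R^• ≠ R^×` having exactly one
regular prime `v`-ideal is strongly primary. -/
theorem stmt13 {T : Type*} [CommRing T] [Nontrivial T] (R : Subring T)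
    (hreg : ∀ x ∈ reg (R : Set T), IsUnit x)
    (hfr : ∀ t : T, ∃ r ∈ (R : Set T), ∃ s ∈ reg (R : Set T), t * s = r)
    (hvm : IsVMarot R) (hmori : IsMoriRing R)
    (hne : reg (R : Set T) ≠ unitsIn (R : Set T))
    (huniq : ∃! P : Set T,
      IsPrimeIdealOf R P ∧ vOp R P = P ∧ ∃ x ∈ P, x ∈ reg (R : Set T)) :
    IsStronglyPrimaryRing R := by
  classical
  refine ⟨hne, ?_⟩
  intro a ha hau
  obtain ⟨P, ⟨hPprime, hPv, hPreg⟩, hPuniq⟩ := huniq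
  have hPsub : IsSubmoduleOf R P := hPprime.1.1
  have hPR : P ⊆ (R : Set T) := hPprime.1.2
  have h1P : (1 : T) ∉ P := by
    intro h1
    apply hPprime.2.1
    refine subset_antisymm hPR (fun r hr => ?_)
    simpa using hPsub.2.2 r hr 1 h1
  -- every regular non-unit lies in P
  have mem_P : ∀ c, c ∈ reg (R : Set T) → c ∉ unitsIn (R : Set T) → c ∈ P := by
    intro c hc hcu
    have hpow : ∀ n : ℕ, (1 : T) ^ n ∉ smulR R c := by
      intro n hmem
      rw [one_pow] at hmem
      obtain ⟨r, hr, hr1⟩ := hmem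
      exact hcu ⟨hc.1, r, hr, hr1.symm⟩
    obtain ⟨Q, hQp, hQv, hQreg, hQsub, -⟩ :=
      exists_prime R hmori hc (hreg c hc) R.one_mem hpow
    have hQP : Q = P := hPuniq Q ⟨hQp, hQv, hQreg⟩
    rw [← hQP]
    exact hQsub (self_mem_smulR R)
  have haP : a ∈ P := mem_P a ha hau
  -- every regular non-unit has a power in a·R
  have pow_mem_aR : ∀ c, c ∈ reg (R : Set T) → c ∉ unitsIn (R : Set T) →
      ∃ n, c ^ n ∈ smulR R a := by
    intro c hc hcu
    by_contra hno
    push_neg at hno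
    obtain ⟨Q, hQp, hQv, hQreg, hQsub, hQpow⟩ :=
      exists_prime R hmori ha (hreg a ha) hc.1 hno
    have hQP : Q = P := hPuniq Q ⟨hQp, hQv, hQreg⟩
    have hcQ : c ∈ Q := by rw [hQP]; exact mem_P c hc hcu
    exact hQpow 1 (by simpa using hcQ)
  -- elements of P are non-units
  have nonunitP : ∀ g ∈ P, g ∉ unitsIn (R : Set T) := by
    rintro g hg ⟨hgR, y, hy, hgy⟩
    apply h1P
    have := hPsub.2.2 y hy g hg
    rwa [mul_comm, hgy] at this
  -- v-Marot: P is v-generated by its regular elements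
  have hPvm : P = vOp R (P ∩ reg (Set.univ : Set T)) :=
    hvm P hPsub ⟨a, haP, reg_univ_of_isUnit (hreg a ha)⟩
      ⟨1, one_mem_reg R, fun x hx => by simpa using hPR hx⟩ hPv
  -- finite v-generation of P by regular elements
  set F2 : Set T → Prop := fun J => ∃ E : Finset T,
    (↑E : Set T) ⊆ P ∩ reg (R : Set T) ∧ J = vOp R (insert a (↑E : Set T)) with hF2def
  have hF2 : ∀ J, F2 J → J ⊆ (R : Set T) ∧ vOp R J = J ∧ ∃ x ∈ J, x ∈ reg (R : Set T) := by
    rintro J ⟨E, hE, rfl⟩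
    have hgen : insert a (↑E : Set T) ⊆ (R : Set T) := by
      rintro x (rfl | hx)
      · exact ha.1
      · exact hPR (hE hx).1
    exact ⟨vOp_subset R hgen, vOp_vOp R _, a, subset_vOp R _ (Set.mem_insert a _), ha⟩
  have hI2 : F2 (vOp R (insert a (↑(∅ : Finset T) : Set T))) := ⟨∅, by simp, rfl⟩
  obtain ⟨J, ⟨E, hE, hJ⟩, -, hmax⟩ := exists_maximal R hmori F2 hF2 hI2
  have hcov : P ∩ reg (R : Set T) ⊆ J := by
    intro x hx
    by_contra hxJ
    have hK : F2 (vOp R (insert a (↑(insert x E) : Set T))) := by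
      refine ⟨insert x E, ?_, rfl⟩
      rw [Finset.coe_insert]
      exact Set.insert_subset hx hE
    have hsub : J ⊆ vOp R (insert a (↑(insert x E) : Set T)) := by
      rw [hJ]
      apply vOp_mono
      rw [Finset.coe_insert]
      exact Set.insert_subset_insert (Set.subset_insert x _)
    have heq := hmax _ hK hsub
    apply hxJ
    rw [← heq]
    refine subset_vOp R _ (Set.mem_insert_of_mem _ ?_)
    rw [Finset.coe_insert]
    exact Set.mem_insert x _
  have hPJ : P = vOp R (insert a (↑E : Set T)) := by
    apply subset_antisymm
    · have h1 : P ∩ reg (Set.univ : Set T) ⊆ J := by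
        intro x hx
        exact hcov ⟨hx.1, hPR hx.1, fun y hy h0 => hx.2.2 y trivial h0⟩
      calc P = vOp R (P ∩ reg (Set.univ : Set T)) := hPvm
        _ ⊆ vOp R J := vOp_mono R h1
        _ = J := (hF2 J ⟨E, hE, hJ⟩).2.1
        _ = vOp R (insert a (↑E : Set T)) := hJ
    · rw [← hPv]
      apply vOp_mono
      rintro x (rfl | hx)
      · exact haP
      · exact (hE hx).1
  set G : Finset T := insert a E with hG
  have hGcoe : (↑G : Set T) = insert a (↑E : Set T) := Finset.coe_insert a E
  have hPG : P = vOp R (↑G : Set T) := by rw [hGcoe]; exact hPJ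
  have hGpow : ∀ g ∈ G, g ∈ (R : Set T) ∧ ∃ n, g ^ n ∈ smulR R a := by
    intro g hg
    rcases Finset.mem_insert.mp hg with rfl | hgE
    · exact ⟨ha.1, 1, by simpa using self_mem_smulR R⟩
    · have hgP := (hE hgE).1
      exact ⟨hPR hgP, pow_mem_aR g (hE hgE).2 (nonunitP g hgP)⟩
  obtain ⟨M, hM⟩ := exists_uniform_pow R a G hGpow
  refine ⟨G.card * M + 1, Nat.succ_pos _, ?_⟩
  intro f hf
  have hfP : ∀ i, f i ∈ vOp R (↑G : Set T) := by
    intro i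
    rw [← hPG]
    exact mem_P (f i) (hf i).1 (hf i).2
  have hprod : (∏ i, f i) ∈ vOp R (prodSet (↑G : Set T) (G.card * M + 1)) :=
    prod_mem_vOp_prodSet R _ f hfP
  have hGR : (↑G : Set T) ⊆ (R : Set T) := fun g hg => (hGpow g hg).1
  have hsub2 : prodSet (↑G : Set T) (G.card * M + 1) ⊆ smulR R a :=
    prodSet_subset_smulR R a G hGR hM
  have hmem : (∏ i, f i) ∈ smulR R a := by
    have h3 := vOp_mono R hsub2 hprod
    rwa [vOp_smulR R (hreg a ha)] at h3
  obtain ⟨r, hr, hrE⟩ := hmem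
  have hprodreg : (∏ i, f i) ∈ reg (R : Set T) := prod_mem_reg R f (fun i => (hf i).1)
  refine ⟨r, ?_, hrE⟩
  exact reg_of_mul_reg R ha.1 hr (by rw [← hrE]; exact hprodreg)

end Paper
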